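/- The metric space (Z, d_∞), where Z = {1,…,N}^ℕ with a = N^{-1/m}, has strictly positive m-dimensional Hausdorff measure: ℋ^m(Z) ≥ 2^{-m} a^{2m} ω_m > 0. -/

import Mathlib

open MeasureTheory

/- The ultrametric `d_∞` on `Z = {1,…,N}^ℕ` (modeled as `ℕ → Fin N`). -/
open Classical in
noncomputable def dinf {N : ℕ} (a : ℝ) (z z' : ℕ → Fin N) : ℝ :=
  if h : z = z' then 0 else a ^ Nat.find (Function.ne_iff.mp h)

/-- Type synonym for the sequence space `Z = {1,…,N}^ℕ`. -/
def SeqSpace (N : ℕ) : Type := ℕ → Fin N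

/-- The volume `ω_m` of the unit ball in `ℝ^m`. -/
noncomputable def omegaBall (m : ℕ) : ENNReal :=
  MeasureTheory.volume (Metric.ball (0 : EuclideanSpace ℝ (Fin m)) 1)

/-! ### Auxiliary definitions and lemmas -/

/-- The base-`N` digit expansion map `ℝ → SeqSpace N`. -/
noncomputable def digitMap (N : ℕ) (hN : 0 < N) (x : ℝ) : SeqSpace N :=
  fun n => ⟨(⌊x * (N : ℝ) ^ (n + 1)⌋).toNat % N, Nat.mod_lt _ hN⟩

/-- A cylinder set of depth `k`. -/
def cylSet (N k : ℕ) (w : ℕ → Fin N) : Set (SeqSpace N) := {z | ∀ i < k, z i = w i}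

lemma dist_le_pow_iff {N : ℕ} {a : ℝ} (ha0 : 0 < a) (ha1 : a < 1)
    [MetricSpace (SeqSpace N)]
    (hdist : ∀ z z' : SeqSpace N, dist z z' = dinf a z z') (z w : SeqSpace N) (k : ℕ) :
    dist z w ≤ a ^ k ↔ ∀ i < k, z i = w i := by
  letI : ∀ n, Decidable (z n = w n) := fun n => instDecidableEqFin N (z n) (w n)
  rw [hdist]
  unfold dinf
  split_ifs with h
  · subst h
    simp [(pow_pos ha0 k).le]
  · constructor
    · intro hle i hik
      by_contra hne
      have hfind : Nat.find (Function.ne_iff.mp h) ≤ i := Nat.find_le hne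
      have hlt : a ^ k < a ^ Nat.find (Function.ne_iff.mp h) :=
        pow_lt_pow_right_of_lt_one₀ ha0 ha1 (lt_of_le_of_lt hfind hik)
      linarith
    · intro hag
      have hk : k ≤ Nat.find (Function.ne_iff.mp h) := by
        by_contra h'
        push_neg at h'
        exact Nat.find_spec (Function.ne_iff.mp h) (hag _ h')
      exact pow_le_pow_of_le_one ha0.le ha1.le hk

lemma cylSet_eq_closedBall {N : ℕ} {a : ℝ} (ha0 : 0 < a) (ha1 : a < 1)
    [MetricSpace (SeqSpace N)]
    (hdist : ∀ z z' : SeqSpace N, dist z z' = dinf a z z') (k : ℕ) (w : ℕ → Fin N) :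
    cylSet N k w = Metric.closedBall (α := SeqSpace N) w (a ^ k) := by
  ext z
  simp only [cylSet, Set.mem_setOf_eq, Metric.mem_closedBall]
  exact (dist_le_pow_iff ha0 ha1 hdist z w k).symm

/-- Extend a finite word to an infinite sequence. -/
def extWord {N : ℕ} (hN : 0 < N) (p : (k : ℕ) × (Fin k → Fin N)) : ℕ → Fin N :=
  fun i => if h : i < p.1 then p.2 ⟨i, h⟩ else ⟨0, hN⟩

/-- Every open set in `SeqSpace N` is a union of cylinders from a countable family. -/
lemma isOpen_eq_biUnion {N : ℕ} (hN : 0 < N) {a : ℝ} (ha0 : 0 < a) (ha1 : a < 1)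
    [MetricSpace (SeqSpace N)]
    (hdist : ∀ z z' : SeqSpace N, dist z z' = dinf a z z')
    {U : Set (SeqSpace N)} (hU : IsOpen U) :
    U = ⋃ p ∈ {p : (k : ℕ) × (Fin k → Fin N) | cylSet N p.1 (extWord hN p) ⊆ U},
        cylSet N p.1 (extWord hN p) := by
  ext z
  simp only [Set.mem_iUnion, Set.mem_setOf_eq, exists_prop]
  constructor
  · intro hz
    obtain ⟨r, hr, hball⟩ := Metric.isOpen_iff.mp hU z hz
    obtain ⟨k, hk⟩ := exists_pow_lt_of_lt_one hr ha1
    refine ⟨⟨k, fun i => z i⟩, ?_, ?_⟩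
    · intro z' hz'
      apply hball
      have hag : ∀ i < k, z' i = z i := by
        intro i hi
        have := hz' i hi
        rwa [extWord, dif_pos hi] at this
      have := (dist_le_pow_iff ha0 ha1 hdist z' z k).mpr hag
      exact Metric.mem_ball.mpr (lt_of_le_of_lt this hk)
    · intro i hi
      rw [extWord, dif_pos hi]
  · rintro ⟨p, hpU, hzp⟩
    exact hpU hzp

lemma measurableSet_preimage_cyl {N : ℕ} (hN : 0 < N) (k : ℕ) (w : ℕ → Fin N) :
    MeasurableSet (digitMap N hN ⁻¹' cylSet N k w) := by
  have heq : digitMap N hN ⁻¹' cylSet N k w =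
      ⋂ i ∈ Finset.range k, {x : ℝ | digitMap N hN x i = w i} := by
    ext x
    simp [cylSet]
  rw [heq]
  refine MeasurableSet.biInter (Finset.range k).countable_toSet fun i _ => ?_
  have h2 : {x : ℝ | digitMap N hN x i = w i} =
      (fun x : ℝ => ⌊x * (N : ℝ) ^ (i + 1)⌋) ⁻¹' {n : ℤ | n.toNat % N = (w i).val} := by
    ext x
    simp [digitMap, Fin.ext_iff]
  rw [h2]
  exact (Int.measurable_floor.comp (measurable_mul_const _)) (Set.to_countable _).measurableSet

lemma measurable_digitMap {N : ℕ} (hN : 0 < N) {a : ℝ} (ha0 : 0 < a) (ha1 : a < 1)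
    [MetricSpace (SeqSpace N)] [MeasurableSpace (SeqSpace N)] [BorelSpace (SeqSpace N)]
    (hdist : ∀ z z' : SeqSpace N, dist z z' = dinf a z z') :
    Measurable (digitMap N hN) := by
  rw [BorelSpace.measurable_eq (α := SeqSpace N)]
  refine measurable_generateFrom fun U hU => ?_
  rw [isOpen_eq_biUnion hN ha0 ha1 hdist hU, Set.preimage_iUnion₂]
  exact MeasurableSet.biUnion (Set.to_countable _)
    fun p _ => measurableSet_preimage_cyl hN p.1 (extWord hN p)

lemma floor_eq_of_digits {N : ℕ} (hN : 0 < N) (w : ℕ → Fin N) (k : ℕ) :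
    ∃ c : ℤ, ∀ x : ℝ, 0 ≤ x → x < 1 → (∀ i < k, digitMap N hN x i = w i) →
      ⌊x * (N : ℝ) ^ k⌋ = c := by
  induction k with
  | zero =>
    exact ⟨0, fun x hx0 hx1 _ => by
      rw [pow_zero, mul_one]; exact Int.floor_eq_zero_iff.mpr ⟨hx0, hx1⟩⟩
  | succ k ih =>
    obtain ⟨c, hc⟩ := ih
    refine ⟨N * c + ((w k).val : ℤ), fun x hx0 hx1 hdig => ?_⟩
    have hfk : ⌊x * (N : ℝ) ^ k⌋ = c :=
      hc x hx0 hx1 fun i hi => hdig i (hi.trans (Nat.lt_succ_self k))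
    have hNpos : (0 : ℝ) < N := by exact_mod_cast hN
    set F := ⌊x * (N : ℝ) ^ (k + 1)⌋ with hF
    have hfle : (c : ℝ) ≤ x * (N : ℝ) ^ k := by
      have := Int.floor_le (x * (N : ℝ) ^ k); rwa [hfk] at this
    have hflt : x * (N : ℝ) ^ k < c + 1 := by
      have := Int.lt_floor_add_one (x * (N : ℝ) ^ k); rwa [hfk] at this
    have h1 : (N : ℤ) * c ≤ F := by
      rw [hF]
      apply Int.le_floor.mpr
      push_cast
      rw [pow_succ]
      nlinarith [mul_nonneg (sub_nonneg.mpr hfle) hNpos.le]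
    have h2 : F < (N : ℤ) * c + N := by
      rw [hF]
      apply Int.floor_lt.mpr
      push_cast
      rw [pow_succ]
      nlinarith [mul_pos (sub_pos.mpr hflt) hNpos]
    have h3 : 0 ≤ F := by
      rw [hF]
      apply Int.floor_nonneg.mpr
      positivity
    have h4 : F.toNat % N = (w k).val := by
      have := hdig k (Nat.lt_succ_self k)
      simpa [digitMap, Fin.ext_iff, hF] using this
    have hNz : (N : ℤ) ≠ 0 := by exact_mod_cast hN.ne'
    have e1 : F % N = F - N * c := by
      conv_lhs => rw [show F = (F - N * c) + c * N by ring]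
      rw [Int.add_mul_emod_self_right]
      exact Int.emod_eq_of_lt (by omega) (by omega)
    have e2 : F % N = ((w k).val : ℤ) := by
      rw [← Int.toNat_of_nonneg h3, ← h4]
      exact_mod_cast (Int.natCast_mod F.toNat N).symm
    have : F - N * c = ((w k).val : ℤ) := by rw [← e1, e2]
    linarith

theorem hausdorffMeasure_pos (N m : ℕ) (hN : 2 ≤ N) (hm : 2 ≤ m) (a : ℝ)
    (ha : a = (N : ℝ) ^ (-(1 : ℝ) / m))
    [MetricSpace (SeqSpace N)] [MeasurableSpace (SeqSpace N)] [BorelSpace (SeqSpace N)]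
    (hdist : ∀ z z' : SeqSpace N, dist z z' = dinf a z z') :
    ENNReal.ofReal (a ^ (2 * m)) * omegaBall m / 2 ^ m ≤
        (omegaBall m / 2 ^ m) * μH[(m : ℝ)] (Set.univ : Set (SeqSpace N)) ∧
      0 < ENNReal.ofReal (a ^ (2 * m)) * omegaBall m / 2 ^ m := by
  have hN0 : 0 < N := by omega
  have hm0 : 0 < m := by omega
  have hNR : (0 : ℝ) < N := by exact_mod_cast hN0
  have hN1 : (1 : ℝ) < N := by exact_mod_cast (by omega : 1 < N)
  have hmR : (0 : ℝ) < m := by exact_mod_cast hm0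
  have ha0 : 0 < a := by rw [ha]; exact Real.rpow_pos_of_pos hNR _
  have ha1 : a < 1 := by
    rw [ha]
    exact Real.rpow_lt_one_of_one_lt_of_neg hN1 (div_neg_of_neg_of_pos (by norm_num) hmR)
  have haN : a ^ m = 1 / N := by
    rw [ha, ← Real.rpow_natCast ((N : ℝ) ^ (-(1 : ℝ) / m)) m, ← Real.rpow_mul hNR.le]
    rw [show (-(1 : ℝ) / m) * m = -1 by field_simp]
    rw [Real.rpow_neg_one, one_div]
  have hg : Measurable (digitMap N hN0) := measurable_digitMap hN0 ha0 ha1 hdist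
  set ν : Measure (SeqSpace N) :=
    (volume.restrict (Set.Ico (0 : ℝ) 1)).map (digitMap N hN0) with hνdef
  have hνuniv : ν Set.univ = 1 := by
    rw [hνdef, Measure.map_apply hg MeasurableSet.univ, Set.preimage_univ,
      Measure.restrict_apply MeasurableSet.univ, Set.univ_inter, Real.volume_Ico]
    norm_num
  have hmeascyl : ∀ (k : ℕ) (w : ℕ → Fin N), MeasurableSet (cylSet N k w) := by
    intro k w
    rw [cylSet_eq_closedBall ha0 ha1 hdist]
    exact measurableSet_closedBall
  have hνcyl : ∀ (k : ℕ) (w : ℕ → Fin N),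
      ν (cylSet N k w) ≤ ENNReal.ofReal ((1 / (N : ℝ)) ^ k) := by
    intro k w
    obtain ⟨c, hc⟩ := floor_eq_of_digits hN0 w k
    rw [hνdef, Measure.map_apply hg (hmeascyl k w),
      Measure.restrict_apply (hg (hmeascyl k w))]
    have hNk : (0 : ℝ) < (N : ℝ) ^ k := by positivity
    have hsub : digitMap N hN0 ⁻¹' cylSet N k w ∩ Set.Ico 0 1 ⊆
        Set.Ico ((c : ℝ) / (N : ℝ) ^ k) (((c : ℝ) + 1) / (N : ℝ) ^ k) := by
      intro x hx
      obtain ⟨hx1, hx2, hx3⟩ := hx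
      have hx1' : ∀ i < k, digitMap N hN0 x i = w i := hx1
      have hfl := hc x hx2 hx3 hx1'
      constructor
      · rw [div_le_iff₀ hNk]
        have := Int.floor_le (x * (N : ℝ) ^ k); rwa [hfl] at this
      · rw [lt_div_iff₀ hNk]
        have := Int.lt_floor_add_one (x * (N : ℝ) ^ k); rwa [hfl] at this
    calc volume (digitMap N hN0 ⁻¹' cylSet N k w ∩ Set.Ico 0 1)
        ≤ volume (Set.Ico ((c : ℝ) / (N : ℝ) ^ k) (((c : ℝ) + 1) / (N : ℝ) ^ k)) :=
          measure_mono hsub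
      _ = ENNReal.ofReal ((1 / (N : ℝ)) ^ k) := by
          rw [Real.volume_Ico]
          congr 1
          rw [div_sub_div_same, one_div, inv_pow]
          ring_nf
  have key : ENNReal.ofReal (a ^ (2 * m)) ≤ μH[(m : ℝ)] (Set.univ : Set (SeqSpace N)) := by
    have hle : (ENNReal.ofReal (a ^ m)) • ν ≤ μH[(m : ℝ)] := by
      apply Measure.le_hausdorffMeasure _ _ (ENNReal.ofReal a)
        (by simpa using ha0)
      intro s hs
      rcases Set.eq_empty_or_nonempty s with rfl | ⟨z₀, hz₀⟩
      · simp
      by_cases hd0 : EMetric.diam s = 0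
      · have hsub : ∀ k, s ⊆ cylSet N k z₀ := by
          intro k z hz
          have hzz : z = z₀ := EMetric.diam_eq_zero_iff.mp hd0 hz hz₀
          subst hzz
          intro i _; rfl
        have hb : ∀ k, ν s ≤ ENNReal.ofReal ((1 / (N : ℝ)) ^ k) :=
          fun k => (measure_mono (hsub k)).trans (hνcyl k z₀)
        have hlim : Filter.Tendsto (fun k => ENNReal.ofReal ((1 / (N : ℝ)) ^ k))
            Filter.atTop (nhds 0) := by
          rw [show (0 : ENNReal) = ENNReal.ofReal 0 by simp]
          apply ENNReal.tendsto_ofReal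
          apply tendsto_pow_atTop_nhds_zero_of_lt_one (by positivity)
          rw [div_lt_one hNR]
          exact hN1
        have h0 : ν s = 0 := le_antisymm (ge_of_tendsto' hlim hb) (zero_le)
        simp [Measure.smul_apply, h0]
      · have hdtop : EMetric.diam s ≠ ⊤ := (hs.trans_lt ENNReal.ofReal_lt_top).ne
        set d := (EMetric.diam s).toReal with hdd
        have hd0' : 0 < d := ENNReal.toReal_pos hd0 hdtop
        have hda : d ≤ a := by
          have := ENNReal.toReal_mono ENNReal.ofReal_ne_top hs
          rwa [ENNReal.toReal_ofReal ha0.le] at this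
        have hex : ∃ k, a ^ k < d := exists_pow_lt_of_lt_one hd0' ha1
        have hKspec : a ^ Nat.find hex < d := Nat.find_spec hex
        have hK0 : Nat.find hex ≠ 0 := by
          intro h
          rw [h, pow_zero] at hKspec
          linarith
        obtain ⟨k, hk⟩ : ∃ k, Nat.find hex = k + 1 := ⟨Nat.find hex - 1, by omega⟩
        have hdk : d ≤ a ^ k :=
          le_of_not_gt (Nat.find_min hex (by omega))
        rw [hk] at hKspec
        have hsub : s ⊆ cylSet N k z₀ := by
          intro z hz
          have hed : edist z z₀ ≤ EMetric.diam s := EMetric.edist_le_diam_of_mem hz hz₀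
          have hdzd : dist z z₀ ≤ d := by
            rw [dist_edist]
            exact ENNReal.toReal_mono hdtop hed
          exact (dist_le_pow_iff ha0 ha1 hdist z z₀ k).mp (hdzd.trans hdk)
        have hb : ν s ≤ ENNReal.ofReal ((1 / (N : ℝ)) ^ k) :=
          (measure_mono hsub).trans (hνcyl k z₀)
        have hmain : ENNReal.ofReal (a ^ m) * ν s ≤ ENNReal.ofReal (d ^ m) := by
          calc ENNReal.ofReal (a ^ m) * ν s
              ≤ ENNReal.ofReal (a ^ m) * ENNReal.ofReal ((1 / (N : ℝ)) ^ k) :=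
                mul_le_mul_right hb _
            _ = ENNReal.ofReal (a ^ m * (a ^ m) ^ k) := by
                rw [← ENNReal.ofReal_mul (by positivity), haN]
            _ = ENNReal.ofReal ((a ^ (k + 1)) ^ m) := by
                rw [← pow_mul, ← pow_mul, ← pow_add]
                congr 2
                ring
            _ ≤ ENNReal.ofReal (d ^ m) :=
                ENNReal.ofReal_le_ofReal (pow_le_pow_left₀ (by positivity) hKspec.le m)
        rw [Measure.smul_apply, smul_eq_mul]
        refine hmain.trans ?_
        rw [show Metric.ediam s = ENNReal.ofReal d from (ENNReal.ofReal_toReal hdtop).symm,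
          ENNReal.rpow_natCast, ENNReal.ofReal_pow hd0'.le]
    have h2 := Measure.le_iff'.1 hle Set.univ
    rw [Measure.smul_apply, smul_eq_mul, hνuniv, mul_one] at h2
    refine le_trans ?_ h2
    apply ENNReal.ofReal_le_ofReal
    have h1 : a ^ m ≤ 1 := pow_le_one₀ ha0.le ha1.le
    have h2' : 0 < a ^ m := pow_pos ha0 m
    calc a ^ (2 * m) = (a ^ m) ^ 2 := by rw [← pow_mul]; ring_nf
      _ ≤ a ^ m := by nlinarith
  have homega : omegaBall m ≠ 0 := (Metric.measure_ball_pos volume 0 one_pos).ne'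
  constructor
  · have heq : ENNReal.ofReal (a ^ (2 * m)) * omegaBall m / 2 ^ m =
        (omegaBall m / 2 ^ m) * ENNReal.ofReal (a ^ (2 * m)) := by
      rw [div_eq_mul_inv, div_eq_mul_inv]
      ring
    rw [heq]
    exact mul_le_mul_right key _
  · apply ENNReal.div_pos
    · apply mul_ne_zero _ homega
      simp only [ne_eq, ENNReal.ofReal_eq_zero, not_le]
      positivity
    · exact ENNReal.pow_ne_top ENNReal.ofNat_ne_top
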